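/- Let ν > 0, ρ > 0 and let (ℓ_j)_{j ∈ ℕ} be a sequence of independent, identically distributed real random variables, each with the exponential distribution of rate ν, and set S_k := ℓ_1 + ⋯ + ℓ_k. Then almost surely there exists N₀ ∈ ℕ such that for all N ≥ N₀ one has #{ k ∈ ℕ : S_k ≤ N/(2ρ) and ℓ_k ≥ 3 } ≥ ν N / (8 e^{3ν} ρ). -/

import Mathlib

open MeasureTheory ProbabilityTheory Filter

section CountLongAux
open Real Set

namespace CountLong

variable {ν : ℝ}

lemma expMeasure_Iic (hν : 0 < ν) (x : ℝ) :
    expMeasure ν (Set.Iic x) = ENNReal.ofReal (if 0 ≤ x then 1 - Real.exp (-(ν * x)) else 0) := by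
  have := isProbabilityMeasure_expMeasure hν
  rw [← ofReal_cdf (expMeasure ν) x, cdf_expMeasure_eq hν]

lemma expMeasure_singleton (hν : 0 < ν) (a : ℝ) : expMeasure ν {a} = 0 := by
  have : expMeasure ν = volume.withDensity (gammaPDF 1 ν) := rfl
  rw [this]
  exact withDensity_absolutelyContinuous volume _ (measure_singleton a)

lemma expMeasure_Ioi (hν : 0 < ν) {t : ℝ} (ht : 0 ≤ t) :
    expMeasure ν (Set.Ioi t) = ENNReal.ofReal (Real.exp (-(ν * t))) := by
  have := isProbabilityMeasure_expMeasure hν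
  have hIic := expMeasure_Iic hν t
  rw [if_pos ht] at hIic
  have hc : expMeasure ν (Set.Ioi t) = 1 - expMeasure ν (Set.Iic t) := by
    rw [← Set.compl_Iic]
    rw [measure_compl measurableSet_Iic (measure_ne_top _ _), measure_univ]
  have hexp1 : Real.exp (-(ν * t)) ≤ 1 :=
    Real.exp_le_one_iff.mpr (by nlinarith)
  rw [hc, hIic, ← ENNReal.ofReal_one, ← ENNReal.ofReal_sub _ (by linarith [Real.exp_pos (-(ν * t))])]
  norm_num

lemma expMeasure_Ici (hν : 0 < ν) {t : ℝ} (ht : 0 ≤ t) :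
    expMeasure ν (Set.Ici t) = ENNReal.ofReal (Real.exp (-(ν * t))) := by
  rw [← expMeasure_Ioi hν ht]
  apply le_antisymm
  · rw [← Set.Ioi_insert, Set.insert_eq]
    refine le_trans (measure_union_le _ _) ?_
    rw [expMeasure_singleton hν, zero_add]
  · exact measure_mono Set.Ioi_subset_Ici_self

lemma integral_exp_neg_mul_Ioi (hν : 0 < ν) :
    ∫ t in Set.Ioi (0:ℝ), Real.exp (-(ν * t)) = 1 / ν := by
  have hderiv : ∀ x ∈ Set.Ici (0:ℝ),
      HasDerivAt (fun a => -Real.exp (-(ν * a)) / ν) (Real.exp (-(ν * x))) x := by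
    intro x _
    have h := (hasDerivAt_neg_exp_mul_exp (r := ν) (x := x)).div_const ν
    simpa [mul_div_assoc, mul_div_cancel_left₀ _ hν.ne'] using h
  have hint : IntegrableOn (fun t => Real.exp (-(ν * t))) (Set.Ioi (0:ℝ)) := by
    simpa [neg_mul] using exp_neg_integrableOn_Ioi (0:ℝ) hν
  have htend : Tendsto (fun x => -Real.exp (-(ν * x)) / ν) atTop (nhds 0) := by
    have h1 : Tendsto (fun x : ℝ => ν * x) atTop atTop :=
      Tendsto.const_mul_atTop hν tendsto_id
    have h2 : Tendsto (fun x : ℝ => Real.exp (-(ν * x))) atTop (nhds 0) :=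
      (Real.tendsto_exp_neg_atTop_nhds_zero).comp h1
    have := (h2.neg).div_const ν
    simpa using this
  have := integral_Ioi_of_hasDerivAt_of_tendsto' hderiv hint htend
  rw [this]
  simp [Real.exp_zero]
  ring

lemma lintegral_ofReal_expMeasure (hν : 0 < ν) :
    ∫⁻ x, ENNReal.ofReal x ∂(expMeasure ν) = ENNReal.ofReal (1 / ν) := by
  have := isProbabilityMeasure_expMeasure hν
  have hnn : 0 ≤ᵐ[expMeasure ν] (id : ℝ → ℝ) := by
    rw [Filter.EventuallyLE, ae_iff]
    have hsub : {x : ℝ | ¬ (0:ℝ) ≤ id x} ⊆ Set.Iic 0 := by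
      intro x hx
      simp only [Set.mem_setOf_eq, not_le, id] at hx
      exact le_of_lt hx
    refine measure_mono_null hsub ?_
    rw [expMeasure_Iic hν 0]
    simp
  have hlc := lintegral_eq_lintegral_meas_lt (expMeasure ν) hnn measurable_id.aemeasurable
  simp only [id] at hlc
  rw [hlc]
  have hcongr : ∫⁻ t in Set.Ioi (0:ℝ), expMeasure ν {a : ℝ | t < a}
      = ∫⁻ t in Set.Ioi (0:ℝ), ENNReal.ofReal (Real.exp (-(ν * t))) := by
    apply setLIntegral_congr_fun measurableSet_Ioi
    intro t ht
    exact expMeasure_Ioi hν (le_of_lt ht)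
  rw [hcongr]
  have hint : IntegrableOn (fun t => Real.exp (-(ν * t))) (Set.Ioi (0:ℝ)) := by
    simpa [neg_mul] using exp_neg_integrableOn_Ioi (0:ℝ) hν
  rw [← ofReal_integral_eq_lintegral_ofReal hint
    (Filter.Eventually.of_forall fun t => (Real.exp_pos _).le)]
  rw [integral_exp_neg_mul_Ioi hν]

lemma integrable_id_expMeasure (hν : 0 < ν) : Integrable (id : ℝ → ℝ) (expMeasure ν) := by
  have := isProbabilityMeasure_expMeasure hν
  refine ⟨measurable_id.aestronglyMeasurable, ?_⟩
  rw [HasFiniteIntegral]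
  have hnn : ∀ᵐ x ∂(expMeasure ν), 0 ≤ x := by
    rw [ae_iff]
    refine measure_mono_null (fun x hx => ?_) (by rw [expMeasure_Iic hν 0]; simp)
    simp only [Set.mem_setOf_eq, not_le] at hx
    exact Set.mem_Iic.mpr (le_of_lt hx)
  have : ∫⁻ x, ‖x‖ₑ ∂(expMeasure ν) = ∫⁻ x, ENNReal.ofReal x ∂(expMeasure ν) := by
    apply lintegral_congr_ae
    filter_upwards [hnn] with x hx
    rw [← Real.enorm_eq_ofReal hx]
  simp only [id_eq]
  rw [this, lintegral_ofReal_expMeasure hν]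
  exact ENNReal.ofReal_lt_top

lemma integral_id_expMeasure (hν : 0 < ν) : ∫ x, x ∂(expMeasure ν) = 1 / ν := by
  have := isProbabilityMeasure_expMeasure hν
  have hnn : 0 ≤ᵐ[expMeasure ν] (id : ℝ → ℝ) := by
    rw [Filter.EventuallyLE, ae_iff]
    refine measure_mono_null (fun x hx => ?_) (by rw [expMeasure_Iic hν 0]; simp)
    simp only [Set.mem_setOf_eq, not_le, id] at hx
    exact Set.mem_Iic.mpr (le_of_lt hx)
  have h := integral_eq_lintegral_of_nonneg_ae hnn measurable_id.aestronglyMeasurable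
  simp only [id_eq] at h
  rw [h]
  rw [lintegral_ofReal_expMeasure hν, ENNReal.toReal_ofReal (by positivity)]


 

lemma deterministic (ν ρ : ℝ) (hν : 0 < ν) (hρ : 0 < ρ) (L : ℕ → ℝ)
    (hpos : ∀ j, 0 < L j)
    (hS : Tendsto (fun n : ℕ => (∑ i ∈ Finset.range n, L (i+1)) / n) atTop (nhds (1/ν)))
    (hX : Tendsto (fun n : ℕ =>
        (∑ i ∈ Finset.range n, (if 3 ≤ L (i+1) then (1:ℝ) else 0)) / n) atTop
        (nhds (Real.exp (-(3*ν))))) :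
    ∃ N₀ : ℕ, ∀ N, N₀ ≤ N →
      ν * N / (8 * Real.exp (3 * ν) * ρ)
        ≤ {k : ℕ | 1 ≤ k ∧ (∑ j ∈ Finset.Icc 1 k, L j) ≤ (N : ℝ) / (2 * ρ)
            ∧ 3 ≤ L k}.ncard := by
  classical
  set p := Real.exp (-(3*ν)) with hp
  have hppos : 0 < p := Real.exp_pos _
  set S : ℕ → ℝ := fun n => ∑ j ∈ Finset.Icc 1 n, L j with hSdef
  have hrange : ∀ n : ℕ, ∑ i ∈ Finset.range n, L (i+1) = S n := by
    intro n
    show _ = ∑ j ∈ Finset.Icc 1 n, L j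
    rw [← Finset.Ico_add_one_right_eq_Icc, Finset.sum_Ico_eq_sum_range]
    simp [add_comm]
  have hrangeX : ∀ n : ℕ,
      (∑ i ∈ Finset.range n, (if 3 ≤ L (i+1) then (1:ℝ) else 0))
        = ∑ k ∈ Finset.Icc 1 n, (if 3 ≤ L k then (1:ℝ) else 0) := by
    intro n
    rw [← Finset.Ico_add_one_right_eq_Icc, Finset.sum_Ico_eq_sum_range]
    simp [add_comm]
  have e1 : ∀ᶠ n : ℕ in atTop, (∑ i ∈ Finset.range n, L (i+1)) / n < 3/(2*ν) := by
    refine hS.eventually_lt_const ?_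
    rw [div_lt_div_iff₀ hν (by positivity)]
    nlinarith
  have e2 : ∀ᶠ n : ℕ in atTop, 1/(2*ν) < (∑ i ∈ Finset.range n, L (i+1)) / n := by
    refine hS.eventually_const_lt ?_
    rw [div_lt_div_iff₀ (by positivity) hν]
    nlinarith
  have e3 : ∀ᶠ n : ℕ in atTop,
      p/2 < (∑ i ∈ Finset.range n, (if 3 ≤ L (i+1) then (1:ℝ) else 0)) / n :=
    hX.eventually_const_lt (by linarith)
  obtain ⟨n₀, hn₀⟩ := eventually_atTop.mp ((e1.and e2).and e3)
  set m₀ := max n₀ 1 with hm₀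
  have key : ∀ n : ℕ, m₀ ≤ n →
      S n ≤ (n:ℝ) * (3/(2*ν)) ∧ (n:ℝ) * (1/(2*ν)) < S n ∧
      p/2 * n ≤ ∑ k ∈ Finset.Icc 1 n, (if 3 ≤ L k then (1:ℝ) else 0) := by
    intro n hn
    have hn1 : 1 ≤ n := le_trans (le_max_right _ _) hn
    have hnpos : (0:ℝ) < n := by exact_mod_cast hn1
    obtain ⟨⟨h1, h2⟩, h3⟩ := hn₀ n (le_trans (le_max_left _ _) hn)
    rw [hrange] at h1 h2
    rw [hrangeX] at h3
    refine ⟨?_, ?_, ?_⟩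
    · rw [div_lt_iff₀ hnpos] at h1; linarith [h1]
    · rw [lt_div_iff₀ hnpos] at h2; linarith [h2]
    · rw [lt_div_iff₀ hnpos] at h3; linarith [h3]
  have hcast : Tendsto (fun N : ℕ => (N:ℝ)) atTop atTop := tendsto_natCast_atTop_atTop
  have e4 : ∀ᶠ N : ℕ in atTop, (m₀:ℝ) ≤ ν * N / (3*ρ) :=
    ((Tendsto.const_mul_atTop hν hcast).atTop_div_const (by positivity)).eventually_ge_atTop _
  have e5 : ∀ᶠ N : ℕ in atTop, (1:ℝ) ≤ ν * N / (12*ρ) :=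
    ((Tendsto.const_mul_atTop hν hcast).atTop_div_const (by positivity)).eventually_ge_atTop _
  obtain ⟨N₀, hN₀⟩ := eventually_atTop.mp (e4.and e5)
  refine ⟨N₀, fun N hN => ?_⟩
  obtain ⟨hA, hB⟩ := hN₀ N hN
  set n := ⌊ν * N / (3*ρ)⌋₊ with hndef
  have hNnn : (0:ℝ) ≤ ν * N / (3*ρ) := by positivity
  have hm₀n : m₀ ≤ n := Nat.le_floor hA
  have hnN : (n:ℝ) ≤ ν * N / (3*ρ) := Nat.floor_le hNnn
  have hnlow : ν * N / (4*ρ) ≤ (n:ℝ) := by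
    have h1 : ν * (N:ℝ) / (3*ρ) - 1 < (n:ℝ) := Nat.sub_one_lt_floor _
    have h2 : ν * (N:ℝ) / (3*ρ) - ν * N / (4*ρ) = ν * N / (12*ρ) := by
      field_simp
      ring
    linarith
  obtain ⟨hSub, hSlb, hXlb⟩ := key n hm₀n
  have hSN : S n ≤ (N:ℝ) / (2*ρ) := by
    have h1 : (n:ℝ) * (3/(2*ν)) ≤ (ν * N / (3*ρ)) * (3/(2*ν)) := by
      apply mul_le_mul_of_nonneg_right hnN (by positivity)
    have h2 : (ν * (N:ℝ) / (3*ρ)) * (3/(2*ν)) = (N:ℝ) / (2*ρ) := by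
      field_simp
    linarith
  set T : Set ℕ := {k : ℕ | 1 ≤ k ∧ (∑ j ∈ Finset.Icc 1 k, L j) ≤ (N : ℝ) / (2 * ρ)
            ∧ 3 ≤ L k} with hTdef
  set M := max m₀ ⌈ν * N / ρ⌉₊ with hMdef
  have hTsub : T ⊆ ↑(Finset.range (M+1)) := by
    intro k hk
    simp only [Finset.coe_range, Set.mem_Iio]
    by_contra hand
    push_neg at hand
    have hkM : M + 1 ≤ k := hand
    have hkm₀ : m₀ ≤ k := le_trans (le_trans (le_max_left _ _) (Nat.le_succ M)) hkM
    have hkc : (ν * N / ρ : ℝ) ≤ k := by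
      have : ⌈ν * N / ρ⌉₊ ≤ k := le_trans (le_trans (le_max_right _ _) (Nat.le_succ M)) hkM
      exact le_trans (Nat.le_ceil _) (by exact_mod_cast this)
    obtain ⟨_, hlb, _⟩ := key k hkm₀
    have h1 : (ν * (N:ℝ) / ρ) * (1/(2*ν)) = (N:ℝ) / (2*ρ) := by
      field_simp
    have h2 : (N:ℝ)/(2*ρ) ≤ (k:ℝ) * (1/(2*ν)) := by
      rw [← h1]
      apply mul_le_mul_of_nonneg_right hkc (by positivity)
    have := hk.2.1
    have hSk : S k ≤ (N:ℝ)/(2*ρ) := this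
    linarith
  have hTfin : T.Finite := Set.Finite.subset (Finset.range (M+1)).finite_toSet hTsub
  set A := (Finset.Icc 1 n).filter (fun k => 3 ≤ L k) with hAdef
  have hAsub : ↑A ⊆ T := by
    intro k hk
    simp only [hAdef, Finset.coe_filter, Finset.mem_Icc, Set.mem_setOf_eq] at hk
    obtain ⟨⟨hk1, hkn⟩, hk3⟩ := hk
    refine ⟨hk1, ?_, hk3⟩
    have hmono : (∑ j ∈ Finset.Icc 1 k, L j) ≤ S n := by
      apply Finset.sum_le_sum_of_subset_of_nonneg
      · exact Finset.Icc_subset_Icc_right hkn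
      · exact fun i _ _ => (hpos i).le
    linarith
  have hcard : (A.card : ℝ) ≤ (T.ncard : ℝ) := by
    have : A.card ≤ T.ncard := by
      rw [← Set.ncard_coe_finset]
      exact Set.ncard_le_ncard hAsub hTfin
    exact_mod_cast this
  have hcardsum : (A.card : ℝ) = ∑ k ∈ Finset.Icc 1 n, (if 3 ≤ L k then (1:ℝ) else 0) := by
    rw [hAdef, ← Finset.sum_boole]
  have hfinal : ν * N / (8 * Real.exp (3 * ν) * ρ) ≤ p/2 * n := by
    have h1 : p/2 * (ν * N / (4*ρ)) ≤ p/2 * n :=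
      mul_le_mul_of_nonneg_left hnlow (by positivity)
    have h2 : ν * (N:ℝ) / (8 * Real.exp (3 * ν) * ρ) = p/2 * (ν * N / (4*ρ)) := by
      rw [hp, Real.exp_neg]
      have := Real.exp_pos (3*ν)
      field_simp
      ring_nf
    linarith
  calc ν * (N:ℝ) / (8 * Real.exp (3 * ν) * ρ) ≤ p/2 * n := hfinal
    _ ≤ ∑ k ∈ Finset.Icc 1 n, (if 3 ≤ L k then (1:ℝ) else 0) := hXlb
    _ = (A.card : ℝ) := hcardsum.symm
    _ ≤ (T.ncard : ℝ) := hcard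

end CountLong
end CountLongAux

/-- For i.i.d. exponential random variables `ℓ_j` of rate `ν > 0` with partial
sums `S_k = ℓ_1 + ⋯ + ℓ_k`, and any `ρ > 0`, almost surely, eventually in `N`, the number of
indices `k ≥ 1` with `S_k ≤ N/(2ρ)` and `ℓ_k ≥ 3` is at least `νN/(8 e^{3ν} ρ)`. -/
theorem count_long_spacings_in_box
    {Ω : Type*} [MeasurableSpace Ω] (μ : Measure Ω) [IsProbabilityMeasure μ]
    (ν ρ : ℝ) (hν : 0 < ν) (hρ : 0 < ρ)
    (ℓ : ℕ → Ω → ℝ) (hmeas : ∀ j, Measurable (ℓ j))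
    (hindep : iIndepFun ℓ μ)
    (hdist : ∀ j, μ.map (ℓ j) = expMeasure ν) :
    ∀ᵐ ω ∂μ, ∃ N₀ : ℕ, ∀ N, N₀ ≤ N →
      ν * N / (8 * Real.exp (3 * ν) * ρ)
        ≤ {k : ℕ | 1 ≤ k ∧ (∑ j ∈ Finset.Icc 1 k, ℓ j ω) ≤ (N : ℝ) / (2 * ρ)
            ∧ 3 ≤ ℓ k ω}.ncard := by
  classical
  have hPexp : IsProbabilityMeasure (expMeasure ν) := isProbabilityMeasure_expMeasure hν
  have hmap : ∀ j (s : Set ℝ), MeasurableSet s → μ ((ℓ j) ⁻¹' s) = expMeasure ν s := by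
    intro j s hs
    rw [← hdist j, Measure.map_apply (hmeas j) hs]
  have hpos : ∀ᵐ ω ∂μ, ∀ j, 0 < ℓ j ω := by
    rw [MeasureTheory.ae_all_iff]
    intro j
    rw [MeasureTheory.ae_iff]
    have hseteq : {ω | ¬ 0 < ℓ j ω} = (ℓ j) ⁻¹' (Set.Iic 0) := by
      ext ω; simp [not_lt]
    rw [hseteq, hmap j _ measurableSet_Iic, CountLong.expMeasure_Iic hν 0]
    simp
  have hintl : ∀ j, Integrable (ℓ j) μ := by
    intro j
    have h0 : Integrable (id : ℝ → ℝ) (μ.map (ℓ j)) := by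
      rw [hdist j]; exact CountLong.integrable_id_expMeasure hν
    exact (integrable_map_measure measurable_id.aestronglyMeasurable
      (hmeas j).aemeasurable).mp h0
  have hmeanl : ∀ j, μ[ℓ j] = 1 / ν := by
    intro j
    have h0 : ∫ x, x ∂(μ.map (ℓ j)) = 1 / ν := by
      rw [hdist j]; exact CountLong.integral_id_expMeasure hν
    rw [← h0]
    exact (integral_map (hmeas j).aemeasurable measurable_id.aestronglyMeasurable).symm
  have hidl : ∀ i j, IdentDistrib (ℓ i) (ℓ j) μ μ :=
    fun i j => ⟨(hmeas i).aemeasurable, (hmeas j).aemeasurable, by rw [hdist i, hdist j]⟩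
  have hSLLN1 : ∀ᵐ ω ∂μ,
      Tendsto (fun n : ℕ => (∑ i ∈ Finset.range n, ℓ (i+1) ω) / n) atTop (nhds (1/ν)) := by
    have h := strong_law_ae_real (fun i => ℓ (i+1)) (hintl 1)
      (fun i j hij => hindep.indepFun (show i+1 ≠ j+1 by omega))
      (fun i => hidl (i+1) 1)
    rwa [show μ[ℓ (0+1)] = 1/ν from hmeanl 1] at h
  set f : ℝ → ℝ := fun x => if 3 ≤ x then 1 else 0 with hfdef
  have hfmeas : Measurable f := by
    apply Measurable.ite _ measurable_const measurable_const
    exact measurableSet_Ici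
  have hXint : Integrable (fun ω => f (ℓ (0+1) ω)) μ := by
    refine ⟨(hfmeas.comp (hmeas 1)).aestronglyMeasurable, ?_⟩
    apply HasFiniteIntegral.of_bounded (C := 1)
    filter_upwards with ω
    rw [hfdef]
    dsimp only
    split <;> simp
  have hXmean : μ[fun ω => f (ℓ (0+1) ω)] = Real.exp (-(3*ν)) := by
    have h0 : ∫ x, f x ∂(μ.map (ℓ 1)) = Real.exp (-(3*ν)) := by
      rw [hdist 1]
      have hfind : f = Set.indicator (Set.Ici (3:ℝ)) (fun _ => (1:ℝ)) := by
        funext x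
        simp [hfdef, Set.indicator_apply, Set.mem_Ici]
      rw [hfind, MeasureTheory.integral_indicator_const _ measurableSet_Ici, measureReal_def,
        CountLong.expMeasure_Ici hν (by norm_num : (0:ℝ) ≤ 3)]
      rw [ENNReal.toReal_ofReal (Real.exp_pos _).le]
      simp [mul_comm]
    rwa [integral_map (hmeas 1).aemeasurable hfmeas.aestronglyMeasurable] at h0
  have hSLLN2 : ∀ᵐ ω ∂μ, Tendsto (fun n : ℕ =>
      (∑ i ∈ Finset.range n, f (ℓ (i+1) ω)) / n) atTop (nhds (Real.exp (-(3*ν)))) := by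
    have h := strong_law_ae_real (fun i ω => f (ℓ (i+1) ω)) hXint
      (fun i j hij => (hindep.indepFun (show i+1 ≠ j+1 by omega)).comp hfmeas hfmeas)
      (fun i => (hidl (i+1) 1).comp hfmeas)
    rwa [hXmean] at h
  filter_upwards [hpos, hSLLN1, hSLLN2] with ω h1 h2 h3
  exact CountLong.deterministic ν ρ hν hρ (fun j => ℓ j ω) h1 h2 h3
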